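/- For α, β > -1, k ≥ 1, any C^k function f on (0,π), and θ ∈ (0,π), one has (D^{(k)})* f(θ) = ((-1)^k / Ψ^{α,β}(θ)) · sin θ · ((1/sin θ) d/dθ)^k ( (sin θ)^{k-1} Ψ^{α,β}(θ) f(θ) ), where (D^{(k)})* = D_{α,β}* ∘ ⋯ ∘ D_{α+k-1,β+k-1}*. -/

import Mathlib

open Real MeasureTheory Set

/-- Classical Jacobi polynomial (Szegő normalization), via the explicit sum. -/
noncomputable def jacobiP (α β : ℝ) (n : ℕ) (x : ℝ) : ℝ :=
  (Real.Gamma (α + n + 1) / ((Nat.factorial n : ℝ) * Real.Gamma (α + β + n + 1))) *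
    ∑ m ∈ Finset.range (n + 1),
      (Nat.choose n m : ℝ) * (Real.Gamma (α + β + n + m + 1) / Real.Gamma (α + m + 1)) *
        ((x - 1) / 2) ^ m

/-- Ψ^{α,β}(θ) = (sin(θ/2))^{α+1/2} (cos(θ/2))^{β+1/2}. -/
noncomputable def psiF (α β θ : ℝ) : ℝ :=
  Real.sin (θ / 2) ^ (α + 1/2) * Real.cos (θ / 2) ^ (β + 1/2)

/-- Normalizing constant making φ_n^{α,β} of unit L²(0,π)-norm. -/
noncomputable def jacobiC (α β : ℝ) (n : ℕ) : ℝ :=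
  (Real.sqrt (∫ θ in Set.Ioo (0:ℝ) Real.pi,
    (psiF α β θ * jacobiP α β n (Real.cos θ)) ^ 2))⁻¹

/-- Jacobi trigonometric function φ_n^{α,β}. -/
noncomputable def phiF (α β : ℝ) (n : ℕ) (θ : ℝ) : ℝ :=
  psiF α β θ * jacobiC α β n * jacobiP α β n (Real.cos θ)

/-- First order Jacobi derivative D_{α,β}. -/
noncomputable def jacobiD (α β : ℝ) (f : ℝ → ℝ) (θ : ℝ) : ℝ :=
  deriv f θ - ((2*α+1)/4) * (Real.cos (θ/2) / Real.sin (θ/2)) * f θ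
    + ((2*β+1)/4) * Real.tan (θ/2) * f θ

/-- Formal adjoint D_{α,β}* = D_{α,β} - 2 d/dθ. -/
noncomputable def jacobiDStar (α β : ℝ) (f : ℝ → ℝ) (θ : ℝ) : ℝ :=
  jacobiD α β f θ - 2 * deriv f θ

/-- Higher order derivative D^{(k)} = D_{α+k-1,β+k-1} ∘ ⋯ ∘ D_{α,β}. -/
noncomputable def jacobiDk (α β : ℝ) : ℕ → (ℝ → ℝ) → ℝ → ℝ
  | 0 => fun f => f
  | (k+1) => fun f => jacobiD (α + k) (β + k) (jacobiDk α β k f)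

/-- Adjoint higher order derivative (D^{(k)})* = D_{α,β}* ∘ ⋯ ∘ D_{α+k-1,β+k-1}*. -/
noncomputable def jacobiDkStar (α β : ℝ) : ℕ → (ℝ → ℝ) → ℝ → ℝ
  | 0 => fun f => f
  | (k+1) => fun f => jacobiDStar α β (jacobiDkStar (α+1) (β+1) k f)

/-- The operator g ↦ g'/sin θ. -/
noncomputable def sinD (g : ℝ → ℝ) : ℝ → ℝ := fun θ => deriv g θ / Real.sin θ

section Aux

private lemma sin_half_pos {θ : ℝ} (hθ : θ ∈ Set.Ioo (0:ℝ) Real.pi) : 0 < Real.sin (θ/2) :=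
  Real.sin_pos_of_pos_of_lt_pi (by linarith [hθ.1]) (by nlinarith [Real.pi_pos, hθ.2])

private lemma cos_half_pos {θ : ℝ} (hθ : θ ∈ Set.Ioo (0:ℝ) Real.pi) : 0 < Real.cos (θ/2) :=
  Real.cos_pos_of_mem_Ioo ⟨by nlinarith [Real.pi_pos, hθ.1], by linarith [hθ.2]⟩

private lemma psi_pos (α β : ℝ) {θ : ℝ} (hθ : θ ∈ Set.Ioo (0:ℝ) Real.pi) :
    0 < psiF α β θ :=
  mul_pos (Real.rpow_pos_of_pos (sin_half_pos hθ) _) (Real.rpow_pos_of_pos (cos_half_pos hθ) _)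

private lemma psi_hasDerivAt (α β θ : ℝ) (hθ : θ ∈ Set.Ioo (0:ℝ) Real.pi) :
    HasDerivAt (psiF α β)
      (psiF α β θ * ((2*α+1)/4 * (Real.cos (θ/2) / Real.sin (θ/2))
        - (2*β+1)/4 * Real.tan (θ/2))) θ := by
  have hs := sin_half_pos hθ
  have hc := cos_half_pos hθ
  have hhalf : HasDerivAt (fun t : ℝ => t / 2) (1/2) θ := (hasDerivAt_id θ).div_const 2
  have hsin : HasDerivAt (fun t : ℝ => Real.sin (t/2)) (Real.cos (θ/2) * (1/2)) θ :=
    by have := (Real.hasDerivAt_sin (θ/2)).comp θ hhalf; exact this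
  have hcos : HasDerivAt (fun t : ℝ => Real.cos (t/2)) (-Real.sin (θ/2) * (1/2)) θ :=
    by have := (Real.hasDerivAt_cos (θ/2)).comp θ hhalf; exact this
  have h1' : HasDerivAt (fun t : ℝ => Real.sin (t/2) ^ (α + 1/2))
      ((Real.cos (θ/2) * (1/2)) * (α + 1/2) * Real.sin (θ/2) ^ (α + 1/2 - 1)) θ :=
    hsin.rpow_const (Or.inl (ne_of_gt hs))
  have h2' : HasDerivAt (fun t : ℝ => Real.cos (t/2) ^ (β + 1/2))
      ((-Real.sin (θ/2) * (1/2)) * (β + 1/2) * Real.cos (θ/2) ^ (β + 1/2 - 1)) θ :=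
    hcos.rpow_const (Or.inl (ne_of_gt hc))
  have hmul := h1'.mul h2'
  refine hmul.congr_deriv ?_
  unfold psiF
  rw [show α + 1/2 - 1 = (α + 1/2) - 1 by ring, Real.rpow_sub hs, Real.rpow_sub hc,
    Real.rpow_one, Real.rpow_one, Real.tan_eq_sin_div_cos]
  field_simp
  ring

private lemma psi_contDiffOn (α β : ℝ) (n : WithTop ℕ∞) :
    ContDiffOn ℝ n (psiF α β) (Set.Ioo (0:ℝ) Real.pi) := by
  have hh : ContDiff ℝ n (fun t : ℝ => t / 2) := contDiff_id.div_const 2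
  apply ContDiffOn.mul
  · apply ContDiffOn.rpow_const_of_ne ((Real.contDiff_sin.comp hh).contDiffOn)
    intro x hx
    exact ne_of_gt (sin_half_pos hx)
  · apply ContDiffOn.rpow_const_of_ne ((Real.contDiff_cos.comp hh).contDiffOn)
    intro x hx
    exact ne_of_gt (cos_half_pos hx)

private lemma psi_succ (α β θ : ℝ) (hθ : θ ∈ Set.Ioo (0:ℝ) Real.pi) :
    psiF (α+1) (β+1) θ = psiF α β θ * (Real.sin θ / 2) := by
  have hs := sin_half_pos hθ
  have hc := cos_half_pos hθ
  have hd : Real.sin θ = 2 * Real.sin (θ/2) * Real.cos (θ/2) := by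
    have := Real.sin_two_mul (θ/2)
    rw [show 2 * (θ/2) = θ by ring] at this
    linarith
  unfold psiF
  rw [show α + 1 + 1/2 = (α + 1/2) + 1 by ring, show β + 1 + 1/2 = (β + 1/2) + 1 by ring,
    Real.rpow_add hs, Real.rpow_add hc, Real.rpow_one, Real.rpow_one, hd]
  ring

private lemma sinD_iter_const_mul (c : ℝ) : ∀ (k : ℕ) (g : ℝ → ℝ),
    sinD^[k] (fun t => c * g t) = fun θ => c * sinD^[k] g θ := by
  intro k
  induction k with
  | zero => intro g; rfl
  | succ k ih =>
    intro g
    rw [Function.iterate_succ_apply, Function.iterate_succ_apply]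
    have h : sinD (fun t => c * g t) = fun θ => c * sinD g θ := by
      funext θ
      simp only [sinD, deriv_const_mul_field, mul_div_assoc]
    rw [h, ih (sinD g)]

private lemma sinD_iter_congr {U : Set ℝ} (hU : IsOpen U) : ∀ (k : ℕ) (g1 g2 : ℝ → ℝ),
    (∀ t ∈ U, g1 t = g2 t) → ∀ t ∈ U, sinD^[k] g1 t = sinD^[k] g2 t := by
  intro k
  induction k with
  | zero => intro g1 g2 h t ht; exact h t ht
  | succ k ih =>
    intro g1 g2 h t ht
    rw [Function.iterate_succ_apply, Function.iterate_succ_apply]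
    apply ih
    · intro s hs
      unfold sinD
      congr 1
      exact Filter.EventuallyEq.deriv_eq (Filter.eventuallyEq_of_mem (hU.mem_nhds hs) h)
    · exact ht

private lemma sinD_iter_contDiffOn : ∀ (k m : ℕ) (g : ℝ → ℝ),
    ContDiffOn ℝ (m + k : ℕ) g (Set.Ioo (0:ℝ) Real.pi) →
    ContDiffOn ℝ (m : ℕ) (sinD^[k] g) (Set.Ioo (0:ℝ) Real.pi) := by
  intro k
  induction k with
  | zero => intro m g hg; simpa using hg
  | succ k ih =>
    intro m g hg
    rw [Function.iterate_succ_apply]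
    apply ih
    apply ContDiffOn.div
    · apply hg.deriv_of_isOpen isOpen_Ioo
      norm_cast
    · exact Real.contDiff_sin.contDiffOn
    · intro x hx
      exact ne_of_gt (Real.sin_pos_of_pos_of_lt_pi hx.1 hx.2)

private lemma aux_main : ∀ (k : ℕ) (α β : ℝ) (f : ℝ → ℝ),
    ContDiffOn ℝ ((k+1 : ℕ)) f (Set.Ioo (0:ℝ) Real.pi) →
    ∀ θ ∈ Set.Ioo (0:ℝ) Real.pi,
      jacobiDkStar α β (k+1) f θ
        = (-1:ℝ) ^ (k+1) / psiF α β θ * Real.sin θ *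
            (sinD^[k+1] (fun t => Real.sin t ^ k * psiF α β t * f t)) θ := by
  intro k
  induction k with
  | zero =>
    intro α β f hf θ hθ
    have hsθ : 0 < Real.sin θ := Real.sin_pos_of_pos_of_lt_pi hθ.1 hθ.2
    have hPθ : 0 < psiF α β θ := psi_pos α β hθ
    have hfd : DifferentiableAt ℝ f θ :=
      (hf.differentiableOn (by norm_num)).differentiableAt (isOpen_Ioo.mem_nhds hθ)
    have hPd := psi_hasDerivAt α β θ hθ
    have hprod := hPd.mul hfd.hasDerivAt
    simp only [jacobiDkStar, jacobiDStar, jacobiD, Function.iterate_succ_apply,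
      Function.iterate_zero_apply, sinD, pow_zero, one_mul, pow_one]
    rw [show (fun t => psiF α β t * f t) = psiF α β * f from rfl, hprod.deriv]
    set T1 := Real.cos (θ/2) / Real.sin (θ/2) with hT1
    set T2 := Real.tan (θ/2) with hT2
    set P := psiF α β θ with hP
    have hPne : P ≠ 0 := ne_of_gt hPθ
    have hSne : Real.sin θ ≠ 0 := ne_of_gt hsθ
    field_simp
    ring
  | succ k ih =>
    intro α β f hf θ hθ
    have hopen : IsOpen (Set.Ioo (0:ℝ) Real.pi) := isOpen_Ioo
    have hsθ : 0 < Real.sin θ := Real.sin_pos_of_pos_of_lt_pi hθ.1 hθ.2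
    have hPθ : 0 < psiF α β θ := psi_pos α β hθ
    set h : ℝ → ℝ := fun t => Real.sin t ^ (k+1) * psiF α β t * f t with hh
    set G : ℝ → ℝ := sinD^[k+1] h with hG
    have hcd : ContDiffOn ℝ ((1 + (k+1) : ℕ)) h (Set.Ioo (0:ℝ) Real.pi) := by
      apply ContDiffOn.mul (ContDiffOn.mul ?_ (psi_contDiffOn α β _)) ?_
      · exact (Real.contDiff_sin.pow (k+1)).contDiffOn
      · exact hf.of_le (by norm_cast; omega)
    have hG1 : ContDiffOn ℝ ((1:ℕ)) G (Set.Ioo (0:ℝ) Real.pi) :=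
      sinD_iter_contDiffOn (k+1) 1 h hcd
    have hGd : DifferentiableAt ℝ G θ :=
      (hG1.differentiableOn (by norm_num)).differentiableAt (hopen.mem_nhds hθ)
    have hPd := psi_hasDerivAt α β θ hθ
    have hA : ∀ s ∈ Set.Ioo (0:ℝ) Real.pi,
        jacobiDkStar (α+1) (β+1) (k+1) f s = (-1:ℝ)^(k+1) * (G s / psiF α β s) := by
      intro s hs
      have hs1 : 0 < Real.sin s := Real.sin_pos_of_pos_of_lt_pi hs.1 hs.2
      have hPs : 0 < psiF α β s := psi_pos α β hs
      rw [ih (α+1) (β+1) f (hf.of_le (by norm_cast; omega)) s hs]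
      have hcongr : sinD^[k+1] (fun t => Real.sin t ^ k * psiF (α+1) (β+1) t * f t) s
          = sinD^[k+1] (fun t => (1/2 : ℝ) * h t) s := by
        apply sinD_iter_congr hopen (k+1) _ _ _ s hs
        intro t ht
        rw [psi_succ α β t ht]
        simp only [hh]
        ring
      rw [hcongr, sinD_iter_const_mul, psi_succ α β s hs]
      rw [← hG]
      field_simp
    have hFd : HasDerivAt (fun s => (-1:ℝ)^(k+1) * (G s / psiF α β s))
        ((-1:ℝ)^(k+1) * ((deriv G θ * psiF α β θ - G θ *
          (psiF α β θ * ((2*α+1)/4 * (Real.cos (θ/2) / Real.sin (θ/2))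
            - (2*β+1)/4 * Real.tan (θ/2)))) / psiF α β θ ^ 2)) θ :=
      (hGd.hasDerivAt.div hPd (ne_of_gt hPθ)).const_mul _
    have hderivg : deriv (jacobiDkStar (α+1) (β+1) (k+1) f) θ
        = (-1:ℝ)^(k+1) * ((deriv G θ * psiF α β θ - G θ *
          (psiF α β θ * ((2*α+1)/4 * (Real.cos (θ/2) / Real.sin (θ/2))
            - (2*β+1)/4 * Real.tan (θ/2)))) / psiF α β θ ^ 2) := by
      rw [Filter.EventuallyEq.deriv_eq (Filter.eventuallyEq_of_mem (hopen.mem_nhds hθ) hA)]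
      exact hFd.deriv
    show jacobiDStar α β (jacobiDkStar (α+1) (β+1) (k+1) f) θ = _
    rw [jacobiDStar, jacobiD, hderivg, hA θ hθ]
    rw [Function.iterate_succ_apply']
    rw [show sinD^[k+1] (fun t => Real.sin t ^ (k+1) * psiF α β t * f t) = G from rfl]
    rw [show sinD G θ = deriv G θ / Real.sin θ from rfl]
    rw [pow_succ ((-1:ℝ)) (k+1)]
    set T1 := Real.cos (θ/2) / Real.sin (θ/2) with hT1
    set T2 := Real.tan (θ/2) with hT2
    set P := psiF α β θ with hP
    set D1 := deriv G θ with hD1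
    set G0 := G θ with hG0
    have hPne : P ≠ 0 := ne_of_gt hPθ
    have hSne : Real.sin θ ≠ 0 := ne_of_gt hsθ
    clear_value T1 T2 P D1 G0
    clear hA hderivg hFd hG1 hGd hcd ih hf hPd hG hh hPθ hθ hopen
    field_simp
    ring

end Aux

theorem jacobiDkStar_factorization (α β : ℝ) (hα : -1 < α) (hβ : -1 < β) (k : ℕ) (hk : 1 ≤ k)
    (f : ℝ → ℝ) (hf : ContDiffOn ℝ k f (Set.Ioo (0:ℝ) Real.pi)) :
    ∀ θ ∈ Set.Ioo (0:ℝ) Real.pi,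
      jacobiDkStar α β k f θ
        = (-1:ℝ) ^ k / psiF α β θ * Real.sin θ *
            (sinD^[k] (fun t => Real.sin t ^ (k-1) * psiF α β t * f t)) θ := by
  obtain ⟨j, rfl⟩ : ∃ j, k = j + 1 := ⟨k - 1, by omega⟩
  intro θ hθ
  have := aux_main j α β f (by exact_mod_cast hf) θ hθ
  simpa using this
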